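/- arXiv:0810.2767 — 2 statements merged into one kernel-verified Lean document; each statement's English description precedes it below -/
import Mathlib

section
/- The projection θ_n: F[Ḡ_n] → F[Ḡ_{n-1}] (taking upper-left corners) maps Δ_n^ρ to Δ_{n-1}^ρ for every partition-valued function ρ on G_* (with the convention Δ_k^ρ = 0 when ‖ρ‖ > k). -/
open MonoidAlgebra

/-- The group algebra `ℤ[G]`, used as an ambient ring in which `G ∪ {0}` embeds as
`{0} ∪ {single g 1 | g ∈ G}`. -/
abbrev GA (G : Type*) [Group G] := MonoidAlgebra ℤ G

/-- `a` is an entry in `G ∪ {0}`. -/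
def IsEnt {G : Type*} [Group G] (a : GA G) : Prop := a = 0 ∨ ∃ g : G, a = single g 1

/-- An `n × n` matrix with entries in `G ∪ {0}` such that every row and every column
contains at most one nonzero entry. -/
def IsRC {G : Type*} [Group G] {n : ℕ} (M : Matrix (Fin n) (Fin n) (GA G)) : Prop :=
  (∀ i, {j | M i j ≠ 0}.Subsingleton) ∧ (∀ j, {i | M i j ≠ 0}.Subsingleton) ∧
    ∀ i j, IsEnt (M i j)

theorem IsEnt.mul {G : Type*} [Group G] {a b : GA G} (ha : IsEnt a) (hb : IsEnt b) :
    IsEnt (a * b) := by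
  rcases ha with ha | ⟨g, rfl⟩
  · exact Or.inl (by simp [ha])
  rcases hb with hb | ⟨g', rfl⟩
  · exact Or.inl (by simp [hb])
  · exact Or.inr ⟨g * g', by simp [MonoidAlgebra.single_mul_single]⟩

theorem exists_of_mul_ne_zero {G : Type*} [Group G] {n : ℕ}
    {M N : Matrix (Fin n) (Fin n) (GA G)} {i j : Fin n} (h : (M * N) i j ≠ 0) :
    ∃ k, M i k ≠ 0 ∧ N k j ≠ 0 := by
  by_contra hc
  push_neg at hc
  apply h
  rw [Matrix.mul_apply]
  refine Finset.sum_eq_zero fun k _ => ?_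
  by_cases hk : M i k = 0
  · simp [hk]
  · simp [hc k hk]

/-- The semigroup `Ḡ_n` of `n × n` matrices over `G ∪ {0}` with at most one nonzero entry
in each row and each column, realized as a submonoid of the matrix ring over `ℤ[G]`. -/
def GBar (G : Type*) [Group G] (n : ℕ) : Submonoid (Matrix (Fin n) (Fin n) (GA G)) where
  carrier := {M | IsRC M}
  one_mem' := by
    have key : ∀ a b : Fin n, (1 : Matrix (Fin n) (Fin n) (GA G)) a b ≠ 0 → a = b := by
      intro a b h
      by_contra hab
      simp [Matrix.one_apply, hab] at h
    refine ⟨fun i => ?_, fun j => ?_, fun i j => ?_⟩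
    · intro a ha b hb
      exact (key i a ha).symm.trans (key i b hb)
    · intro a ha b hb
      exact (key a j ha).trans (key b j hb).symm
    · by_cases h : i = j
      · subst h
        exact Or.inr ⟨1, by simp [Matrix.one_apply, MonoidAlgebra.one_def]⟩
      · exact Or.inl (by simp [Matrix.one_apply, h])
  mul_mem' := by
    rintro M N ⟨hMr, hMc, hMe⟩ ⟨hNr, hNc, hNe⟩
    refine ⟨fun i => ?_, fun j => ?_, fun i j => ?_⟩
    · intro a ha b hb
      obtain ⟨k, hk1, hk2⟩ := exists_of_mul_ne_zero ha
      obtain ⟨k', hk1', hk2'⟩ := exists_of_mul_ne_zero hb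
      have : k = k' := hMr i hk1 hk1'
      subst this
      exact hNr k hk2 hk2'
    · intro a ha b hb
      obtain ⟨k, hk1, hk2⟩ := exists_of_mul_ne_zero ha
      obtain ⟨k', hk1', hk2'⟩ := exists_of_mul_ne_zero hb
      have : k = k' := hNc j hk2 hk2'
      subst this
      exact hMc k hk1 hk1'
    · by_cases h : (M * N) i j = 0
      · exact Or.inl h
      obtain ⟨k, hk1, hk2⟩ := exists_of_mul_ne_zero h
      have hsum : (M * N) i j = M i k * N k j := by
        rw [Matrix.mul_apply]
        refine Finset.sum_eq_single k (fun b _ hb => ?_) (by simp)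
        by_cases hbz : M i b = 0
        · simp [hbz]
        · exact absurd (hMr i hbz hk1) hb
      rw [hsum]
      exact (hMe i k).mul (hNe k j)

/-- The idempotent `ε_j ∈ Ḡ_n`: the diagonal matrix with `0` in position `(j,j)` and
`1` in the other diagonal positions. -/
noncomputable def epsEl (G : Type*) [Group G] {n : ℕ} (j : Fin n) : GBar G n :=
  ⟨Matrix.diagonal (fun i => if i = j then 0 else 1), by
    have key : ∀ a b : Fin n,
        Matrix.diagonal (fun i : Fin n => if i = j then (0 : GA G) else 1) a b ≠ 0 → a = b := by
      intro a b h
      by_contra hab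
      simp [Matrix.diagonal_apply_ne _ hab] at h
    refine ⟨fun i => ?_, fun k => ?_, fun i k => ?_⟩
    · intro a ha b hb
      exact (key i a ha).symm.trans (key i b hb)
    · intro a ha b hb
      exact (key a k ha).trans (key b k hb).symm
    · by_cases h : i = k
      · subst h
        by_cases hij : i = j
        · exact Or.inl (by simp [Matrix.diagonal_apply_eq, hij])
        · exact Or.inr ⟨1, by simp [Matrix.diagonal_apply_eq, hij, MonoidAlgebra.one_def]⟩
      · exact Or.inl (by simp [Matrix.diagonal_apply_ne _ h])⟩

/-- The action of `S_n` on `G^n` by permuting coordinates. -/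
def permHom (G : Type*) [Group G] (n : ℕ) : Equiv.Perm (Fin n) →* MulAut (Fin n → G) where
  toFun σ :=
    { toFun := fun g => g ∘ σ.symm
      invFun := fun g => g ∘ σ
      left_inv := fun g => by ext i; simp
      right_inv := fun g => by ext i; simp
      map_mul' := fun g h => rfl }
  map_one' := by ext g i; simp; rfl
  map_mul' := fun σ τ => by ext g i; simp [Equiv.Perm.mul_def]

/-- The wreath product `G_n = G^n ⋊ S_n`. -/
abbrev Wreath (G : Type*) [Group G] (n : ℕ) :=
  SemidirectProduct (Fin n → G) (Equiv.Perm (Fin n)) (permHom G n)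

/-- The monoid embedding of the wreath product `G_n` into the matrices over `G ∪ {0}`:
`(g,σ)` goes to the matrix whose `(i,j)` entry is `g_i` if `σ(j) = i` and `0` otherwise. -/
noncomputable def wreathHom (G : Type*) [Group G] (n : ℕ) :
    Wreath G n →* Matrix (Fin n) (Fin n) (GA G) where
  toFun x := Matrix.of fun i j => if x.right j = i then single (x.left i) 1 else 0
  map_one' := by
    apply Matrix.ext
    intro i j
    by_cases h : i = j <;>
      simp [Matrix.one_apply, h, MonoidAlgebra.one_def, eq_comm]
  map_mul' := by
    rintro ⟨a, σ⟩ ⟨b, τ⟩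
    apply Matrix.ext
    intro i j
    rw [Matrix.mul_apply, Finset.sum_eq_single (τ j)]
    · simp only [SemidirectProduct.mul_left, SemidirectProduct.mul_right, Matrix.of_apply]
      rw [Equiv.Perm.mul_apply]
      by_cases h : σ (τ j) = i
      · rw [if_pos h, if_pos h]
        simp only [if_true]
        rw [MonoidAlgebra.single_mul_single]
        congr 1
        have hs : σ.symm i = τ j := by rw [← h]; simp
        simp [permHom, Pi.mul_apply, hs]
      · rw [if_neg h, if_neg h, zero_mul]
    · intro b' _ hb'
      simp only [Matrix.of_apply]
      exact mul_eq_zero_of_right _ (if_neg fun hc => hb' hc.symm)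
    · simp

theorem wreathHom_mem_GBar (G : Type*) [Group G] (n : ℕ) (x : Wreath G n) :
    wreathHom G n x ∈ GBar G n := by
  have key : ∀ i j : Fin n, wreathHom G n x i j ≠ 0 → x.right j = i := by
    intro i j h
    by_contra hc
    simp [wreathHom, hc] at h
  refine ⟨fun i => ?_, fun j => ?_, fun i j => ?_⟩
  · intro a ha b hb
    exact x.right.injective ((key i a ha).trans (key i b hb).symm)
  · intro a ha b hb
    exact (key a j ha).symm.trans (key b j hb)
  · by_cases h : x.right j = i
    · exact Or.inr ⟨x.left i, by simp [wreathHom, h]⟩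
    · exact Or.inl (by simp [wreathHom, h])

/-- The wreath product `G_n` as the submonoid of `Ḡ_n` of matrices with exactly one
nonzero entry in each row and each column. -/
noncomputable def GFull (G : Type*) [Group G] (n : ℕ) :
    Submonoid (Matrix (Fin n) (Fin n) (GA G)) :=
  MonoidHom.mrange (wreathHom G n)

theorem GFull_le_GBar (G : Type*) [Group G] (n : ℕ) : GFull G n ≤ GBar G n := by
  rintro M ⟨x, rfl⟩
  exact wreathHom_mem_GBar G n x

/-- An element of the wreath product, viewed inside `Ḡ_n`. -/
noncomputable def wEl {G : Type*} [Group G] {n : ℕ} (x : Wreath G n) : GBar G n :=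
  ⟨wreathHom G n x, wreathHom_mem_GBar G n x⟩
open scoped Classical

/-- A partition-valued function `ρ = (ρ(C))_{C ∈ G_*}` on the set of conjugacy classes of
`G`, encoded as the multiset of pairs (conjugacy class, part): `ρ(C)` is the multiset of
parts attached to the class `C`. -/
abbrev PartFun (G : Type*) [Group G] := Multiset (ConjClasses G × ℕ+)

/-- `‖ρ‖ = Σ_{C} |ρ(C)|`, the total size of a partition-valued function. -/
def PartFun.size {G : Type*} [Group G] (ρ : PartFun G) : ℕ :=
  (ρ.map fun p => ((p.2 : ℕ))).sum

/-- The data indexing the summands of `C_{n}^{ρ}` (for `ρ` presented as a list `l` of its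
parts): for each part a sequence of indices in `{1,…,n}`, all of them pairwise distinct,
together with `g ∈ G^n` such that each cycle-product lies in the prescribed conjugacy
class and `g_j = 1` for `j` outside the chosen indices. -/
abbrev CnData (G : Type*) [Group G] [Fintype G] (n : ℕ) (l : List (ConjClasses G × ℕ+)) :=
  { d : ((i : Fin l.length) → Fin ((l.get i).2 : ℕ) → Fin n) × (Fin n → G) //
    Function.Injective
      (fun p : Σ i : Fin l.length, Fin ((l.get i).2 : ℕ) => d.1 p.1 p.2) ∧
    (∀ i : Fin l.length,
      ConjClasses.mk ((List.ofFn fun j => d.2 (d.1 i j)).reverse.prod) = (l.get i).1) ∧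
    (∀ k : Fin n,
      (∀ p : Σ i : Fin l.length, Fin ((l.get i).2 : ℕ), d.1 p.1 p.2 ≠ k) → d.2 k = 1) }

/-- The element of `G_n` determined by a summand datum: the permutation is the product of
the cycles `(d_i(0), d_i(1), …)` and the group part is the chosen `g ∈ G^n`. -/
noncomputable def CnData.elem {G : Type*} [Group G] [Fintype G] {n : ℕ}
    {l : List (ConjClasses G × ℕ+)} (d : CnData G n l) : Wreath G n :=
  ⟨d.1.2,
    (Equiv.Perm.extendDomain
      (Equiv.sigmaCongrRight fun i : Fin l.length => finRotate ((l.get i).2 : ℕ))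
      (Equiv.ofInjective _ d.2.1))⟩

/-- The element `C_{n,•}^{ρ}` of `F[G_n]` associated with a list presentation of `ρ`:
the sum of `C_{n,T}^{ρ}` over all `‖ρ‖`-subsets `T` of `{1,…,n}` (the subset `T` being
recovered as the image of the index sequences). -/
noncomputable def CnList (F : Type*) [Field F] (G : Type*) [Group G] [Fintype G] (n : ℕ)
    (l : List (ConjClasses G × ℕ+)) : MonoidAlgebra F (Wreath G n) :=
  haveI : Fintype (CnData G n l) := Fintype.ofFinite _
  ∑ d : CnData G n l, single d.elem (1 : F)

/-- The element `C_n^{ρ} ∈ F[G_n]`. -/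
noncomputable def Cn (F : Type*) [Field F] (G : Type*) [Group G] [Fintype G] (n : ℕ) (ρ : PartFun G) :
    MonoidAlgebra F (Wreath G n) :=
  CnList F G n ρ.toList

/-- The set `T ⊆ {1,…,n}` of indices used by a summand datum (the union of the supports
of the cycles). -/
noncomputable def CnData.T {G : Type*} [Group G] [Fintype G] {n : ℕ}
    {l : List (ConjClasses G × ℕ+)} (d : CnData G n l) : Finset (Fin n) :=
  Finset.univ.image (fun p : Σ i : Fin l.length, Fin ((l.get i).2 : ℕ) => d.1.1 p.1 p.2)

/-- `ε̄_T = Π_{i ∈ T} (1 − ε_i)` in `F[Ḡ_n]` (the factors pairwise commute; the product is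
taken in increasing order of the indices). -/
noncomputable def epsBarT (F : Type*) [Field F] {G : Type*} [Group G] {n : ℕ}
    (T : Finset (Fin n)) : MonoidAlgebra F (GBar G n) :=
  ((T.sort (· ≤ ·)).map fun i => 1 - single (epsEl G i) (1 : F)).prod

/-- `Δ_n^{ρ} = Σ_T C_{n,T}^{ρ} ε̄_T ∈ F[Ḡ_n]`, for `ρ` presented as a list of parts. -/
noncomputable def DeltaList (F : Type*) [Field F] (G : Type*) [Group G] [Fintype G] (n : ℕ)
    (l : List (ConjClasses G × ℕ+)) : MonoidAlgebra F (GBar G n) :=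
  haveI : Fintype (CnData G n l) := Fintype.ofFinite _
  ∑ d : CnData G n l, single (wEl d.elem) (1 : F) * epsBarT F d.T

/-- The element `Δ_n^{ρ} ∈ F[Ḡ_n]`. -/
noncomputable def Delta (F : Type*) [Field F] (G : Type*) [Group G] [Fintype G] (n : ℕ)
    (ρ : PartFun G) : MonoidAlgebra F (GBar G n) :=
  DeltaList F G n ρ.toList

/-- The upper-left `n × n` corner of a matrix in `Ḡ_{n+1}`, an element of `Ḡ_n`. -/
def corner {G : Type*} [Group G] {n : ℕ} (γ : GBar G (n + 1)) : GBar G n :=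
  ⟨(γ : Matrix (Fin (n+1)) (Fin (n+1)) (GA G)).submatrix Fin.castSucc Fin.castSucc, by
    obtain ⟨hr, hc, he⟩ := γ.2
    refine ⟨fun i => fun a ha b hb => ?_, fun j => fun a ha b hb => ?_,
      fun i j => he _ _⟩
    · exact Fin.castSucc_injective n
        (hr (Fin.castSucc i) ha hb)
    · exact Fin.castSucc_injective n
        (hc (Fin.castSucc j) ha hb)⟩

namespace ThetaAux

open Finsupp

variable {G : Type*} [Group G] {n : ℕ}

/-- The condition that column `last` of `γ` is supported on the `(last, last)` entry. -/
def Pc (γ : GBar G (n+1)) : Prop :=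
  ∀ i : Fin n, (γ : Matrix (Fin (n+1)) (Fin (n+1)) (GA G)) i.castSucc (Fin.last n) = 0

theorem Pc.mul {γ δ : GBar G (n+1)} (hγ : Pc γ) (hδ : Pc δ) : Pc (γ * δ) := by
  intro i
  show ((γ : Matrix (Fin (n+1)) (Fin (n+1)) (GA G)) * δ) i.castSucc (Fin.last n) = 0
  rw [Matrix.mul_apply, Fin.sum_univ_castSucc]
  rw [hγ i, zero_mul, add_zero]
  exact Finset.sum_eq_zero fun k _ => by rw [hδ k, mul_zero]

theorem corner_mul {γ δ : GBar G (n+1)} (hγ : Pc γ) :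
    corner (γ * δ) = corner γ * corner δ := by
  apply Subtype.ext
  show ((γ : Matrix (Fin (n+1)) (Fin (n+1)) (GA G)) * δ).submatrix Fin.castSucc Fin.castSucc
    = _ * _
  ext i j
  rw [Matrix.submatrix_apply, Matrix.mul_apply, Fin.sum_univ_castSucc, hγ i, zero_mul,
    add_zero, Matrix.mul_apply]
  rfl

theorem Pc_eps (j : Fin (n+1)) : Pc (epsEl G j) := by
  intro i
  show Matrix.diagonal _ i.castSucc (Fin.last n) = 0
  rw [Matrix.diagonal_apply_ne _ (Fin.castSucc_lt_last i).ne]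

theorem corner_eps (i : Fin n) : corner (epsEl G i.castSucc) = epsEl G i := by
  apply Subtype.ext
  show (Matrix.diagonal _).submatrix Fin.castSucc Fin.castSucc = Matrix.diagonal _
  ext a b
  rcases eq_or_ne a b with rfl | hab
  · simp [Fin.castSucc_inj]
  · simp [Matrix.diagonal_apply_ne _ hab,
      Matrix.diagonal_apply_ne _ ((Fin.castSucc_inj.ne.mpr hab))]

theorem corner_mul_epsLast (γ : GBar G (n+1)) :
    corner (γ * epsEl G (Fin.last n)) = corner γ := by
  apply Subtype.ext
  show ((γ : Matrix (Fin (n+1)) (Fin (n+1)) (GA G)) * Matrix.diagonal _).submatrix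
      Fin.castSucc Fin.castSucc = _
  ext i j
  rw [Matrix.submatrix_apply, Matrix.mul_diagonal]
  simp [(Fin.castSucc_lt_last j).ne]
  rfl

end ThetaAux
namespace ThetaAux

theorem mul_single_one' {F : Type*} [Field F] {M : Type*} [Monoid M]
    (a : MonoidAlgebra F M) (g : M) :
    a * single g 1 = MonoidAlgebra.mapDomain (· * g) a := by
  induction a using MonoidAlgebra.induction_linear with
  | zero => simp
  | add x y hx hy => rw [add_mul, hx, hy, MonoidAlgebra.mapDomain_add]
  | single m r => rw [MonoidAlgebra.single_mul_single, mul_one, MonoidAlgebra.mapDomain_single]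

theorem md_lin {F : Type*} [Field F] {M N : Type*} (f : M → N) (x : MonoidAlgebra F M) :
    MonoidAlgebra.mapDomainLinearMap F F f x = MonoidAlgebra.mapDomain f x := rfl

theorem md_comp {F : Type*} [Field F] {M N P : Type*} (f : N → P) (g : M → N)
    (x : MonoidAlgebra F M) :
    MonoidAlgebra.mapDomain (f ∘ g) x = MonoidAlgebra.mapDomain f (MonoidAlgebra.mapDomain g x) := by
  rw [← md_lin, ← md_lin, ← md_lin, MonoidAlgebra.mapDomainLinearMap_comp]
  rfl

variable {G : Type*} [Group G] {n : ℕ} {F : Type*} [Field F]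

theorem theta_mul_one_sub_epsLast (a : MonoidAlgebra F (GBar G (n+1))) :
    MonoidAlgebra.mapDomain corner (a * (1 - single (epsEl G (Fin.last n)) (1:F))) = 0 := by
  rw [mul_sub, mul_one, mul_single_one',
    ← md_lin, map_sub, md_lin,
    md_lin, ← md_comp]
  have : (corner ∘ (· * epsEl G (Fin.last n)) : GBar G (n+1) → GBar G n) = corner := by
    funext x
    exact corner_mul_epsLast x
  rw [this, sub_self]

theorem theta_single_mul_prod (γ : GBar G (n+1)) (hγ : Pc γ) (L : List (Fin n)) :
    MonoidAlgebra.mapDomain corner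
      (single γ (1:F) * (L.map fun i => 1 - single (epsEl G i.castSucc) (1:F)).prod)
    = single (corner γ) (1:F) * (L.map fun i => 1 - single (epsEl G i) (1:F)).prod := by
  induction L generalizing γ with
  | nil => simp [MonoidAlgebra.mapDomain_single]
  | cons i L ih =>
    rw [List.map_cons, List.prod_cons, List.map_cons, List.prod_cons,
      ← mul_assoc, mul_sub, mul_one, MonoidAlgebra.single_mul_single, mul_one,
      sub_mul, ← md_lin, map_sub,
      md_lin, md_lin,
      ih γ hγ, ih _ (hγ.mul (Pc_eps _)), corner_mul hγ, corner_eps,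
      sub_mul, one_mul, mul_sub, ← mul_assoc, MonoidAlgebra.single_mul_single, mul_one]

end ThetaAux
namespace ThetaAux

variable {n : ℕ}

theorem sort_image_castSucc (S : Finset (Fin n)) :
    ((S.image Fin.castSucc).sort (· ≤ ·)) = (S.sort (· ≤ ·)).map Fin.castSucc := by
  classical
  refine (fun hp hs => List.Perm.eq_of_pairwise' (Finset.pairwise_sort _ _) hs hp) ?_ ?_
  · rw [← Multiset.coe_eq_coe, Finset.sort_eq, ← Multiset.map_coe, Finset.sort_eq,
      Finset.image_val_of_injOn (Set.injOn_of_injective (Fin.castSucc_injective n))]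
  · exact List.Pairwise.map _ (fun a b h => Fin.castSucc_le_castSucc_iff.mpr h)
      (Finset.pairwise_sort _ _)

theorem sort_last_mem {T : Finset (Fin (n+1))} (h : Fin.last n ∈ T) :
    T.sort (· ≤ ·) = ((T.erase (Fin.last n)).sort (· ≤ ·)) ++ [Fin.last n] := by
  classical
  refine (fun hp hs => List.Perm.eq_of_pairwise' (Finset.pairwise_sort _ _) hs hp) ?_ ?_
  · rw [← Multiset.coe_eq_coe, Finset.sort_eq, ← Multiset.coe_add, Finset.sort_eq,
      Finset.erase_val, add_comm (T.val.erase (Fin.last n)) _, Multiset.coe_singleton,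
      Multiset.singleton_add, Multiset.cons_erase (Finset.mem_def.mp h)]
  · refine List.pairwise_append.mpr ⟨Finset.pairwise_sort _ _, List.pairwise_singleton _ _,
      fun a _ b hb => ?_⟩
    rw [List.mem_singleton] at hb
    exact hb ▸ Fin.le_last a

end ThetaAux
namespace ThetaAux
variable {G : Type*} [Group G] [Fintype G] {n : ℕ} {l : List (ConjClasses G × ℕ+)}
abbrev Sig (l : List (ConjClasses G × ℕ+)) := Σ i : Fin l.length, Fin ((l.get i).2 : ℕ)

def down (d : CnData G (n+1) l) (h : ∀ p : Sig l, d.1.1 p.1 p.2 ≠ Fin.last n) :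
    CnData G n l := by
  refine ⟨⟨fun i j => (d.1.1 i j).castPred (h ⟨i, j⟩), fun k => d.1.2 k.castSucc⟩, ?_, ?_, ?_⟩
  · intro p q hpq
    apply d.2.1
    simpa [Fin.castSucc_castPred] using congrArg Fin.castSucc hpq
  · intro i
    simpa [Fin.castSucc_castPred] using d.2.2.1 i
  · intro k hk
    apply d.2.2.2 k.castSucc
    intro p hp
    exact hk p (Fin.castSucc_injective _ (by rw [Fin.castSucc_castPred, hp]))

def up (d : CnData G n l) : CnData G (n+1) l := by
  refine ⟨⟨fun i j => (d.1.1 i j).castSucc, Fin.snoc d.1.2 1⟩, ?_, ?_, ?_⟩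
  · intro p q hpq
    exact d.2.1 (Fin.castSucc_injective _ hpq)
  · intro i
    simpa [Fin.snoc_castSucc] using d.2.2.1 i
  · intro k
    refine Fin.lastCases (fun _ => ?_) (fun k' hk => ?_) k
    · exact Fin.snoc_last (α := fun _ => G) _ _
    · exact (Fin.snoc_castSucc (α := fun _ => G) _ _ _).trans
        (d.2.2.2 k' (fun p hp => hk p (congrArg Fin.castSucc hp)))

theorem down_idx (d : CnData G (n+1) l) (h : ∀ p : Sig l, d.1.1 p.1 p.2 ≠ Fin.last n)
    (i : Fin l.length) (j : Fin ((l.get i).2 : ℕ)) :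
    (down d h).1.1 i j = (d.1.1 i j).castPred (h ⟨i, j⟩) := rfl

theorem down_g (d : CnData G (n+1) l) (h : ∀ p : Sig l, d.1.1 p.1 p.2 ≠ Fin.last n)
    (k : Fin n) : (down d h).1.2 k = d.1.2 k.castSucc := rfl

theorem up_idx (d : CnData G n l) (i : Fin l.length) (j : Fin ((l.get i).2 : ℕ)) :
    (up d).1.1 i j = (d.1.1 i j).castSucc := rfl

theorem up_g (d : CnData G n l) : (up d).1.2 = Fin.snoc d.1.2 1 := rfl

theorem up_ne_last (d : CnData G n l) (p : Sig l) :
    (up d).1.1 p.1 p.2 ≠ Fin.last n :=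
  (Fin.castSucc_lt_last _).ne

theorem up_down (d : CnData G (n+1) l) (h : ∀ p : Sig l, d.1.1 p.1 p.2 ≠ Fin.last n) :
    up (down d h) = d := by
  apply Subtype.ext
  refine Prod.ext ?_ ?_
  · funext i j
    rw [up_idx, down_idx]
    exact Fin.castSucc_castPred (d.1.1 i j) (h ⟨i, j⟩)
  · funext k
    refine Fin.lastCases ?_ (fun k' => ?_) k
    · show (up (down d h)).1.2 _ = _
      rw [up_g, Fin.snoc_last]
      exact (d.2.2.2 (Fin.last n) h).symm
    · show (up (down d h)).1.2 _ = _
      rw [up_g, Fin.snoc_castSucc, down_g]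

theorem down_up (d : CnData G n l) :
    down (up d) (up_ne_last d) = d := by
  apply Subtype.ext
  refine Prod.ext ?_ ?_
  · funext i j
    rw [down_idx]
    apply Fin.castSucc_injective
    rw [Fin.castSucc_castPred, up_idx]
  · funext k
    show (down (up d) (up_ne_last d)).1.2 _ = _
    rw [down_g, up_g, Fin.snoc_castSucc]
end ThetaAux
namespace ThetaAux
variable {G : Type*} [Group G] [Fintype G] {n : ℕ} {l : List (ConjClasses G × ℕ+)}

theorem elem_right_apply_idx {m : ℕ} (d : CnData G m l) (p : Sig l) :
    d.elem.right (d.1.1 p.1 p.2) = d.1.1 p.1 (finRotate _ p.2) := by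
  have := Equiv.Perm.extendDomain_apply_image
    (Equiv.sigmaCongrRight fun i : Fin l.length => finRotate ((l.get i).2 : ℕ))
    (Equiv.ofInjective _ d.2.1) p
  simpa [CnData.elem] using this

theorem elem_right_apply_not {m : ℕ} (d : CnData G m l) {k : Fin m}
    (h : ∀ p : Sig l, d.1.1 p.1 p.2 ≠ k) : d.elem.right k = k := by
  apply Equiv.Perm.extendDomain_apply_not_subtype
  rintro ⟨p, hp⟩
  exact h p hp
end ThetaAux
namespace ThetaAux
variable {G : Type*} [Group G] [Fintype G] {n : ℕ} {l : List (ConjClasses G × ℕ+)}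

theorem wreathHom_entry_eq {m : ℕ} (x : Wreath G m) {i j : Fin m} (h : x.right j = i) :
    (wreathHom G m x : Matrix (Fin m) (Fin m) (GA G)) i j = single (x.left i) 1 := by
  simp [wreathHom, h]

theorem wreathHom_entry_ne {m : ℕ} (x : Wreath G m) {i j : Fin m} (h : x.right j ≠ i) :
    (wreathHom G m x : Matrix (Fin m) (Fin m) (GA G)) i j = 0 := by
  simp [wreathHom, h]

theorem elem_left {m : ℕ} (d : CnData G m l) : d.elem.left = d.1.2 := rfl

theorem wEl_coe {m : ℕ} (x : Wreath G m) :
    (wEl x : Matrix (Fin m) (Fin m) (GA G)) = wreathHom G m x := rfl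

theorem right_comm (d : CnData G (n+1) l) (h : ∀ p : Sig l, d.1.1 p.1 p.2 ≠ Fin.last n)
    (j : Fin n) :
    d.elem.right j.castSucc = ((down d h).elem.right j).castSucc := by
  by_cases hj : ∃ p : Sig l, (down d h).1.1 p.1 p.2 = j
  · obtain ⟨p, rfl⟩ := hj
    rw [elem_right_apply_idx (down d h) p, down_idx, down_idx, Fin.castSucc_castPred,
      Fin.castSucc_castPred, elem_right_apply_idx d p]
  · push_neg at hj
    have h2 : ∀ p : Sig l, d.1.1 p.1 p.2 ≠ j.castSucc := fun p hp =>
      hj p (Fin.castSucc_injective _ (by rw [down_idx, Fin.castSucc_castPred, hp]))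
    rw [elem_right_apply_not (down d h) hj, elem_right_apply_not d h2]

theorem Pc_wEl (d : CnData G (n+1) l) (h : ∀ p : Sig l, d.1.1 p.1 p.2 ≠ Fin.last n) :
    Pc (wEl d.elem) := by
  intro i
  rw [wEl_coe, wreathHom_entry_ne]
  rw [elem_right_apply_not d h]
  exact (Fin.castSucc_lt_last i).ne'

theorem corner_wEl (d : CnData G (n+1) l) (h : ∀ p : Sig l, d.1.1 p.1 p.2 ≠ Fin.last n) :
    corner (wEl d.elem) = wEl (down d h).elem := by
  apply Subtype.ext
  show (wEl d.elem : Matrix (Fin (n+1)) (Fin (n+1)) (GA G)).submatrix Fin.castSucc Fin.castSucc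
    = (wEl (down d h).elem : Matrix (Fin n) (Fin n) (GA G))
  ext i j
  rw [Matrix.submatrix_apply, wEl_coe, wEl_coe]
  rcases eq_or_ne ((down d h).elem.right j) i with he | he
  · rw [wreathHom_entry_eq _ he, wreathHom_entry_eq _ (by rw [right_comm d h j, he]),
      elem_left, elem_left, down_g]
  · rw [wreathHom_entry_ne _ he,
      wreathHom_entry_ne _ (by rw [right_comm d h j]; simpa [Fin.castSucc_inj] using he)]

theorem T_down (d : CnData G (n+1) l) (h : ∀ p : Sig l, d.1.1 p.1 p.2 ≠ Fin.last n) :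
    d.T = ((down d h).T).image Fin.castSucc := by
  have key : (Fin.castSucc ∘ fun p : Sig l => (down d h).1.1 p.1 p.2)
      = fun p : Sig l => d.1.1 p.1 p.2 := by
    funext p
    rw [Function.comp_apply, down_idx, Fin.castSucc_castPred]
  rw [CnData.T, CnData.T, Finset.image_image, key]

theorem not_mem_T_iff (d : CnData G (n+1) l) :
    Fin.last n ∉ d.T ↔ ∀ p : Sig l, d.1.1 p.1 p.2 ≠ Fin.last n := by
  simp only [CnData.T, Finset.mem_image, Finset.mem_univ, true_and, not_exists]
end ThetaAux

namespace ThetaAux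
set_option synthInstance.maxHeartbeats 1000000 in
theorem main_sum (F : Type*) [Field F] {G : Type*} [Group G] [Fintype G] {n : ℕ}
    (l : List (ConjClasses G × ℕ+)) [Fintype (CnData G (n+1) l)] [Fintype (CnData G n l)] :
    ∑ d : CnData G (n+1) l,
        MonoidAlgebra.mapDomain corner (single (wEl d.elem) (1:F) * epsBarT F d.T)
      = ∑ d : CnData G n l, single (wEl d.elem) (1:F) * epsBarT F d.T := by
  classical
  have hzero : ∀ d : CnData G (n+1) l, Fin.last n ∈ d.T →
      MonoidAlgebra.mapDomain corner (single (wEl d.elem) (1:F) * epsBarT F d.T) = 0 := by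
    intro d hd
    rw [epsBarT, sort_last_mem hd, List.map_append, List.prod_append, ← mul_assoc]
    simp only [List.map_cons, List.map_nil, List.prod_cons, List.prod_nil, mul_one]
    exact theta_mul_one_sub_epsLast _
  have hterm : ∀ (d : CnData G (n+1) l) (h : ∀ p : Sig l, d.1.1 p.1 p.2 ≠ Fin.last n),
      MonoidAlgebra.mapDomain corner (single (wEl d.elem) (1:F) * epsBarT F d.T)
        = single (wEl (down d h).elem) (1:F) * epsBarT F (down d h).T := by
    intro d h
    rw [epsBarT, T_down d h, sort_image_castSucc, List.map_map]
    have hcomp : ((fun i => 1 - single (epsEl G i) (1:F)) ∘ Fin.castSucc)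
        = fun i : Fin n => 1 - single (epsEl G i.castSucc) (1:F) := rfl
    rw [hcomp, theta_single_mul_prod _ (Pc_wEl d h), corner_wEl d h, epsBarT]
  rw [← Finset.sum_filter_add_sum_filter_not Finset.univ
    (fun d : CnData G (n+1) l => Fin.last n ∈ d.T)]
  have h1 : ∑ d ∈ Finset.filter (fun d : CnData G (n+1) l => Fin.last n ∈ d.T) Finset.univ,
      MonoidAlgebra.mapDomain corner (single (wEl d.elem) (1:F) * epsBarT F d.T) = 0 :=
    Finset.sum_eq_zero fun d hd => hzero d (Finset.mem_filter.mp hd).2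
  rw [h1, zero_add]
  refine Finset.sum_bij'
    (i := fun d hd => down d ((not_mem_T_iff d).mp (Finset.mem_filter.mp hd).2))
    (j := fun d' _ => up d') (fun d hd => Finset.mem_univ _) (fun d' _ => ?_) ?_ ?_ ?_
  · exact Finset.mem_filter.mpr ⟨Finset.mem_univ _, (not_mem_T_iff (up d')).mpr (up_ne_last d')⟩
  · intro d hd
    exact up_down d _
  · intro d' _
    exact down_up d'
  · intro d hd
    exact hterm d _
end ThetaAux

open ThetaAux

set_option synthInstance.maxHeartbeats 1000000 in
/-- The canonical projection `θ_{n+1} : F[Ḡ_{n+1}] → F[Ḡ_n]`, the linear extension of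
taking upper-left corners, maps `Δ_{n+1}^{ρ}` to `Δ_n^{ρ}` for every partition-valued
function `ρ` (with the convention `Δ_k^{ρ} = 0` for `‖ρ‖ > k`, automatic here). -/
theorem theta_Delta (F : Type*) [Field F] (G : Type*) [Group G] [Fintype G] (n : ℕ)
    (ρ : PartFun G) :
    MonoidAlgebra.mapDomain corner (Delta F G (n + 1) ρ) = Delta F G n ρ := by
  letI : Fintype (CnData G (n+1) ρ.toList) := Fintype.ofFinite _
  letI : Fintype (CnData G n ρ.toList) := Fintype.ofFinite _
  rw [Delta, Delta, DeltaList, DeltaList]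
  rw [← md_lin, map_sum]
  exact main_sum F ρ.toList
end

section
/- The restriction of the linear map θ_n: F[Ḡ_n] → F[Ḡ_{n-1}] (upper-left corner) to the subspace of the center of F[Ḡ_n] spanned by elements of degree at most n−1 is injective. -/
open MonoidAlgebra

open scoped Classical

/-- `deg(γ) = |{k | γ_{kk} ≠ 1}|`. -/
noncomputable def matDeg {G : Type*} [Group G] {n : ℕ}
    (M : Matrix (Fin n) (Fin n) (GA G)) : ℕ :=
  (Finset.univ.filter fun k : Fin n => M k k ≠ 1).card

-- general auxiliary lemmas

theorem mul_single_one_eq_mapDomain {F M : Type*} [Semiring F] [Monoid M]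
    (x : MonoidAlgebra F M) (a : M) :
    (x * single a 1).coeff = Finsupp.mapDomain (· * a) x.coeff := by
  rw [MonoidAlgebra.mul_def, MonoidAlgebra.coeff_finsuppSum, Finsupp.mapDomain]
  refine Finsupp.sum_congr fun b _ => ?_
  rw [MonoidAlgebra.sum_single_index (by simp)]
  simp

theorem single_one_mul_eq_mapDomain {F M : Type*} [Semiring F] [Monoid M]
    (x : MonoidAlgebra F M) (a : M) :
    (single a 1 * x).coeff = Finsupp.mapDomain (a * ·) x.coeff := by
  rw [MonoidAlgebra.mul_def, MonoidAlgebra.sum_single_index (by simp),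
    MonoidAlgebra.coeff_finsuppSum, Finsupp.mapDomain]
  refine Finsupp.sum_congr fun b _ => ?_
  simp

theorem mapDomain_apply_eq_sum {F M N : Type*} [Semiring F] [DecidableEq N] (f : M → N)
    (x : M →₀ F) (π : N) :
    (Finsupp.mapDomain f x) π = ∑ β ∈ x.support.filter (fun β => f β = π), x β := by
  rw [Finsupp.mapDomain, Finsupp.sum_apply, Finsupp.sum, Finset.sum_filter]
  refine Finset.sum_congr rfl fun b _ => ?_
  rw [Finsupp.single_apply]

theorem mobius_lemma {X : Type*} {F : Type*} [Field F] [DecidableEq X] (Δ : Finset X) (g : Finset X → F)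
    (h0 : g ∅ = 0)
    (hT : ∀ T ⊆ Δ, T ≠ Δ → ∑ S ∈ Δ.powerset.filter (fun S => T ⊆ S), g S = 0) :
    ∀ S ⊆ Δ, g S = 0 := by
  have key : ∀ k : ℕ, ∀ S ⊆ Δ, (Δ \ S).card = k → g S = (-1 : F) ^ k * g Δ := by
    intro k
    induction k using Nat.strong_induction_on with
    | _ k IH =>
      intro S hS hcard
      rcases Nat.eq_zero_or_pos k with hk | hk
      · subst hk
        have hSΔ : S = Δ :=
          Finset.Subset.antisymm hS
            (Finset.sdiff_eq_empty_iff_subset.mp (Finset.card_eq_zero.mp hcard))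
        subst hSΔ; simp
      · have hSne : S ≠ Δ := by
          intro h; subst h; simp at hcard; omega
        have hsum := hT S hS hSne
        have hmemS : S ∈ Δ.powerset.filter (fun S' => S ⊆ S') := by
          simp [Finset.mem_powerset, hS]
        rw [← Finset.sum_erase_add _ _ hmemS] at hsum
        set E := Δ \ S with hE
        have hdisjSU : ∀ U ⊆ E, Disjoint S U := by
          intro U hU
          rw [Finset.disjoint_right]
          intro x hxU
          exact (Finset.mem_sdiff.mp (hU hxU)).2
        have hreindex : ∑ S' ∈ (Δ.powerset.filter (fun S' => S ⊆ S')).erase S, g S'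
            = ∑ U ∈ E.powerset.filter (fun U => U ≠ ∅), g (S ∪ U) := by
          refine Finset.sum_nbij' (fun S' => S' \ S) (fun U => S ∪ U) ?_ ?_ ?_ ?_ ?_
          · intro S' hS'
            simp only [Finset.mem_erase, Finset.mem_filter, Finset.mem_powerset] at hS'
            obtain ⟨hne, hsub, hSsub⟩ := hS'
            simp only [Finset.mem_filter, Finset.mem_powerset, hE]
            refine ⟨Finset.sdiff_subset_sdiff hsub (le_refl S), ?_⟩
            intro h
            apply hne
            apply Finset.Subset.antisymm _ hSsub
            intro x hx
            by_cases hxS : x ∈ S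
            · exact hxS
            · exact absurd (Finset.mem_sdiff.mpr ⟨hx, hxS⟩) (by simp [h])
          · intro U hU
            simp only [Finset.mem_filter, Finset.mem_powerset] at hU
            obtain ⟨hUE, hUne⟩ := hU
            simp only [Finset.mem_erase, Finset.mem_filter, Finset.mem_powerset]
            refine ⟨?_, Finset.union_subset hS (hUE.trans Finset.sdiff_subset),
              Finset.subset_union_left⟩
            intro h
            obtain ⟨x, hx⟩ := Finset.nonempty_iff_ne_empty.mpr hUne
            have hxS : x ∈ S := h ▸ Finset.mem_union_right S hx
            exact (Finset.mem_sdiff.mp (hUE hx)).2 hxS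
          · intro S' hS'
            simp only [Finset.mem_erase, Finset.mem_filter, Finset.mem_powerset] at hS'
            exact Finset.union_sdiff_of_subset hS'.2.2
          · intro U hU
            simp only [Finset.mem_filter, Finset.mem_powerset] at hU
            exact Finset.union_sdiff_cancel_left (hdisjSU U hU.1)
          · intro S' hS'
            simp only [Finset.mem_erase, Finset.mem_filter, Finset.mem_powerset] at hS'
            rw [Finset.union_sdiff_of_subset hS'.2.2]
        rw [hreindex] at hsum
        have hval : ∀ U ∈ E.powerset.filter (fun U => U ≠ ∅),
            g (S ∪ U) = (-1 : F) ^ (k - U.card) * g Δ := by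
          intro U hU
          simp only [Finset.mem_filter, Finset.mem_powerset] at hU
          obtain ⟨hUE, hUne⟩ := hU
          have hcard' : (Δ \ (S ∪ U)).card = k - U.card := by
            have h1 : Δ \ (S ∪ U) = E \ U := by
              ext x
              simp only [hE, Finset.mem_sdiff, Finset.mem_union]
              tauto
            rw [h1, Finset.card_sdiff_of_subset hUE, hcard]
          have hlt : k - U.card < k := by
            have : U.card > 0 := Finset.card_pos.mpr (Finset.nonempty_iff_ne_empty.mpr hUne)
            have hUk : U.card ≤ k := hcard ▸ Finset.card_le_card hUE
            omega
          exact IH _ hlt (S ∪ U) (Finset.union_subset hS (hUE.trans Finset.sdiff_subset)) hcard'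
        rw [Finset.sum_congr rfl hval] at hsum
        rw [← Finset.sum_mul] at hsum
        have hpow : ∑ U ∈ E.powerset.filter (fun U => U ≠ ∅), (-1 : F) ^ (k - U.card)
            = -(-1 : F) ^ k := by
          have h1 : ∑ U ∈ E.powerset, (-1 : F) ^ (k - U.card)
              = ∑ U ∈ E.powerset.filter (fun U => U ≠ ∅), (-1 : F) ^ (k - U.card)
                + (-1 : F) ^ k := by
            have herase : E.powerset.filter (fun U => U ≠ ∅) = E.powerset.erase ∅ := by
              ext U
              simp only [Finset.mem_filter, Finset.mem_erase, Finset.mem_powerset]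
              tauto
            rw [herase,
              ← Finset.sum_erase_add E.powerset _ (Finset.empty_mem_powerset E)]
            norm_num
          have h2 : ∑ U ∈ E.powerset, (-1 : F) ^ (k - U.card) = 0 := by
            have : ∀ U ∈ E.powerset, (-1 : F) ^ (k - U.card)
                = (-1 : F) ^ k * (-1 : F) ^ U.card := by
              intro U hU
              have hUk : U.card ≤ k := hcard ▸ Finset.card_le_card (Finset.mem_powerset.mp hU)
              calc (-1 : F) ^ (k - U.card)
                  = (-1 : F) ^ (k - U.card) * ((-1 : F) ^ 2) ^ U.card := by norm_num
                _ = (-1 : F) ^ (k - U.card + 2 * U.card) := by rw [← pow_mul, ← pow_add]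
                _ = (-1 : F) ^ (k + U.card) := by congr 1; omega
                _ = (-1 : F) ^ k * (-1 : F) ^ U.card := by rw [pow_add]
            rw [Finset.sum_congr rfl this, ← Finset.mul_sum]
            have hEne : E ≠ ∅ := by
              intro h; rw [h] at hcard; simp at hcard; omega
            have hz := Finset.sum_powerset_neg_one_pow_card (x := E)
            have hc : (∑ i ∈ E.powerset, (-1 : F) ^ i.card)
                = ((∑ i ∈ E.powerset, (-1 : ℤ) ^ i.card : ℤ) : F) := by
              push_cast
              rfl
            rw [hc, hz, if_neg hEne]
            simp
          rw [h1] at h2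
          linear_combination h2
        rw [hpow] at hsum
        linear_combination hsum
  intro S hS
  have h1 := key (Δ \ S).card S hS rfl
  have h2 := key (Δ \ ∅).card ∅ (Finset.empty_subset Δ) rfl
  rw [h0] at h2
  have hgΔ : g Δ = 0 := by
    rcases mul_eq_zero.mp h2.symm with h | h
    · exact absurd h (by
        have : ((-1 : F) ^ (Δ \ ∅).card) ≠ 0 := by
          apply pow_ne_zero; norm_num
        exact this)
    · exact h
  rw [h1, hgΔ, mul_zero]

namespace ThetaAux
open MonoidAlgebra
variable {G : Type*} [Group G] {n : ℕ}

theorem isRC_diagonal (d : Fin n → GA G) (hd : ∀ i, IsEnt (d i)) :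
    IsRC (Matrix.diagonal d) := by
  have key : ∀ a b : Fin n, Matrix.diagonal d a b ≠ 0 → a = b := by
    intro a b h
    by_contra hab
    simp [Matrix.diagonal_apply_ne _ hab] at h
  refine ⟨fun i a ha b hb => (key i a ha).symm.trans (key i b hb),
          fun j a ha b hb => (key a j ha).trans (key b j hb).symm,
          fun i j => ?_⟩
  by_cases h : i = j
  · subst h; simpa [Matrix.diagonal_apply_eq] using hd i
  · exact Or.inl (Matrix.diagonal_apply_ne _ h)

noncomputable def eS (I : Finset (Fin n)) : GBar G n :=
  ⟨Matrix.diagonal (fun i => if i ∈ I then 1 else 0), isRC_diagonal _ (fun i => by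
    by_cases h : i ∈ I
    · exact Or.inr ⟨1, by simp [h, MonoidAlgebra.one_def]⟩
    · exact Or.inl (by simp [h]))⟩

theorem eS_coe (I : Finset (Fin n)) :
    (eS (G := G) I).1 =
      Matrix.diagonal (fun i => if i ∈ I then (1 : GA G) else 0) := rfl

theorem eS_mul_eS (I J : Finset (Fin n)) : (eS I : GBar G n) * eS J = eS (I ∩ J) := by
  apply Subtype.ext
  rw [Submonoid.coe_mul, eS_coe, eS_coe, eS_coe, Matrix.diagonal_mul_diagonal]
  apply Matrix.ext
  intro a b
  by_cases hab : a = b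
  · subst hab
    simp only [Matrix.diagonal_apply_eq]
    by_cases hI : a ∈ I <;> by_cases hJ : a ∈ J <;> simp [hI, hJ]
  · simp [Matrix.diagonal_apply_ne _ hab]

theorem wEl_mul (x y : Wreath G n) : (wEl x : GBar G n) * wEl y = wEl (x * y) := by
  apply Subtype.ext
  exact ((wreathHom G n).map_mul x y).symm

theorem wEl_one : (wEl 1 : GBar G n) = 1 := by
  apply Subtype.ext
  exact (wreathHom G n).map_one

noncomputable def pEl (σ : Equiv.Perm (Fin n)) : GBar G n := wEl ⟨1, σ⟩

theorem pEl_coe (σ : Equiv.Perm (Fin n)) (i j : Fin n) :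
    (pEl (G := G) σ).1 i j = if σ j = i then 1 else 0 := by
  show (if σ j = i then single (1 : G) (1:ℤ) else 0) = _
  rw [MonoidAlgebra.one_def]

theorem pEl_mul_pEl (σ τ : Equiv.Perm (Fin n)) :
    (pEl σ : GBar G n) * pEl τ = pEl (σ * τ) := by
  rw [pEl, pEl, wEl_mul]
  congr 1
  ext
  · show (1 : Fin n → G) _ * _ = _
    simp [permHom]
  · rfl

theorem pEl_sq (k l : Fin n) : (pEl (Equiv.swap k l) : GBar G n) * pEl (Equiv.swap k l) = 1 := by
  rw [pEl_mul_pEl, Equiv.swap_mul_self]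
  show (wEl ⟨1, 1⟩ : GBar G n) = 1
  exact wEl_one

theorem pEl_mul_diag (σ : Equiv.Perm (Fin n)) (d : Fin n → GA G) :
    (pEl (G := G) σ).1 * Matrix.diagonal d
      = Matrix.diagonal (fun i => d (σ.symm i)) * (pEl (G := G) σ).1 := by
  apply Matrix.ext
  intro i j
  rw [Matrix.mul_diagonal, Matrix.diagonal_mul]
  have hco := pEl_coe (G := G) σ i j
  rw [hco]
  by_cases h : σ j = i
  · rw [if_pos h]
    have hs : σ.symm i = j := by rw [← h]; simp
    rw [hs, one_mul, mul_one]
  · rw [if_neg h, zero_mul, mul_zero]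

theorem pEl_conj_eS (σ : Equiv.Perm (Fin n)) (I : Finset (Fin n)) :
    (pEl σ : GBar G n) * eS I * pEl σ⁻¹ = eS (I.image σ) := by
  apply Subtype.ext
  rw [Submonoid.coe_mul, Submonoid.coe_mul, eS_coe, pEl_mul_diag, eS_coe]
  rw [mul_assoc]
  have hPP : (pEl (G := G) σ).1 * (pEl (G := G) σ⁻¹).1 = 1 := by
    have h := pEl_mul_pEl (G := G) σ σ⁻¹
    rw [mul_inv_cancel] at h
    have := congrArg (Subtype.val) h
    rw [Submonoid.coe_mul] at this
    rw [this]
    show ((wEl 1 : GBar G n) : Matrix (Fin n) (Fin n) (GA G)) = 1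
    rw [wEl_one]
    rfl
  rw [hPP, mul_one]
  have hiff : ∀ i, σ.symm i ∈ I ↔ i ∈ I.image σ := by
    intro i
    constructor
    · intro h; exact Finset.mem_image.mpr ⟨σ.symm i, h, by simp⟩
    · intro h
      obtain ⟨j, hj, hji⟩ := Finset.mem_image.mp h
      rwa [← hji, Equiv.symm_apply_apply]
  apply Matrix.ext
  intro a b
  by_cases hab : a = b
  · subst hab
    simp only [Matrix.diagonal_apply_eq]
    by_cases h : σ.symm a ∈ I
    · rw [if_pos h, if_pos ((hiff a).mp h)]
    · rw [if_neg h, if_neg (fun hc => h ((hiff a).mpr hc))]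
  · simp [Matrix.diagonal_apply_ne _ hab]

/-- embedding of `Ḡ_n` into `Ḡ_{n+1}` adding a zero row and column -/
noncomputable def iota (c : GBar G n) : GBar G (n + 1) := by
  refine ⟨Matrix.of fun i j =>
    if h : i ≠ Fin.last n ∧ j ≠ Fin.last n then c.1 (i.castPred h.1) (j.castPred h.2) else 0,
    ?_, ?_, ?_⟩
  · intro i a ha b hb
    simp only [Set.mem_setOf_eq, Matrix.of_apply] at ha hb
    split_ifs at ha with h1
    split_ifs at hb with h2
    · have := c.2.1 (i.castPred h1.1) ha hb
      have h3 : (a.castPred h1.2).castSucc = (b.castPred h2.2).castSucc := by rw [this]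
      rwa [Fin.castSucc_castPred, Fin.castSucc_castPred] at h3
    · exact absurd rfl hb
    · exact absurd rfl ha
  · intro j a ha b hb
    simp only [Set.mem_setOf_eq, Matrix.of_apply] at ha hb
    split_ifs at ha with h1
    split_ifs at hb with h2
    · have := c.2.2.1 (j.castPred h1.2) ha hb
      have h3 : (a.castPred h1.1).castSucc = (b.castPred h2.1).castSucc := by rw [this]
      rwa [Fin.castSucc_castPred, Fin.castSucc_castPred] at h3
    · exact absurd rfl hb
    · exact absurd rfl ha
  · intro i j
    simp only [Matrix.of_apply]
    split_ifs with h
    · exact c.2.2.2 _ _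
    · exact Or.inl rfl

theorem eps_conj_eq_iota_corner (β : GBar G (n + 1)) :
    (eS ({Fin.last n}ᶜ) : GBar G (n+1)) * (β * eS ({Fin.last n}ᶜ)) = iota (corner β) := by
  apply Subtype.ext
  rw [Submonoid.coe_mul, Submonoid.coe_mul, eS_coe]
  apply Matrix.ext
  intro i j
  rw [Matrix.diagonal_mul, Matrix.mul_diagonal]
  show _ = (iota (corner β)).1 i j
  simp only [iota, Matrix.of_apply]
  by_cases hi : i = Fin.last n
  · rw [if_neg (by simp [hi] :
      i ∉ ({Fin.last n}ᶜ : Finset (Fin (n+1)))), zero_mul,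
      dif_neg (by simp [hi] : ¬(i ≠ Fin.last n ∧ j ≠ Fin.last n))]
  · by_cases hj : j = Fin.last n
    · rw [if_neg (by simp [hj] :
        j ∉ ({Fin.last n}ᶜ : Finset (Fin (n+1)))), mul_zero, mul_zero,
        dif_neg (by simp [hj] : ¬(i ≠ Fin.last n ∧ j ≠ Fin.last n))]
    · rw [if_pos (by simp [hi] : i ∈ ({Fin.last n}ᶜ : Finset (Fin (n+1)))),
        if_pos (by simp [hj] : j ∈ ({Fin.last n}ᶜ : Finset (Fin (n+1)))),
        one_mul, mul_one, dif_pos (And.intro hi hj)]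
      show β.1 i j = β.1 ((i.castPred hi).castSucc) ((j.castPred hj).castSucc)
      rw [Fin.castSucc_castPred, Fin.castSucc_castPred]

theorem mem_image_equiv {σ : Equiv.Perm (Fin n)} {I : Finset (Fin n)} {i : Fin n} :
    i ∈ I.image σ ↔ σ.symm i ∈ I := by
  constructor
  · intro h
    obtain ⟨j, hj, hji⟩ := Finset.mem_image.mp h
    rwa [← hji, Equiv.symm_apply_apply]
  · intro h
    exact Finset.mem_image.mpr ⟨σ.symm i, h, by simp⟩

end ThetaAux

namespace ThetaAux
open scoped Classical
variable {G : Type*} [Group G] {n : ℕ}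

/-- extension order on `Ḡ_n`: `β` agrees with `π` on all nonzero entries of `π`. -/
def ExtM (π β : GBar G n) : Prop := ∀ i j, π.1 i j ≠ 0 → β.1 i j = π.1 i j

noncomputable def rowIdx (π : GBar G n) : Finset (Fin n) :=
  Finset.univ.filter fun i => ∃ j, π.1 i j ≠ 0

noncomputable def colIdx (π : GBar G n) : Finset (Fin n) :=
  Finset.univ.filter fun j => ∃ i, π.1 i j ≠ 0

theorem fiber_iff (π β : GBar G n) :
    (eS (rowIdx π) : GBar G n) * (β * eS (colIdx π)) = π ↔ ExtM π β := by
  have hentry : ∀ i j, ((eS (rowIdx π) : GBar G n) * (β * eS (colIdx π))).1 i j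
      = if i ∈ rowIdx π ∧ j ∈ colIdx π then β.1 i j else 0 := by
    intro i j
    rw [Submonoid.coe_mul, Submonoid.coe_mul, eS_coe, eS_coe,
      Matrix.diagonal_mul, Matrix.mul_diagonal]
    by_cases hi : i ∈ rowIdx π <;> by_cases hj : j ∈ colIdx π <;>
      simp [hi, hj]
  constructor
  · intro h i j hπ
    have hi : i ∈ rowIdx π := by
      simp only [rowIdx, Finset.mem_filter, Finset.mem_univ, true_and]
      exact ⟨j, hπ⟩
    have hj : j ∈ colIdx π := by
      simp only [colIdx, Finset.mem_filter, Finset.mem_univ, true_and]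
      exact ⟨i, hπ⟩
    have hval := congrArg (fun M : GBar G n => M.1 i j) h
    rw [hentry, if_pos ⟨hi, hj⟩] at hval
    exact hval
  · intro h
    apply Subtype.ext
    apply Matrix.ext
    intro i j
    rw [show ((eS (rowIdx π) : GBar G n) * (β * eS (colIdx π)) : GBar G n).val i j
      = if i ∈ rowIdx π ∧ j ∈ colIdx π then β.1 i j else 0 from hentry i j]
    by_cases hcnd : i ∈ rowIdx π ∧ j ∈ colIdx π
    · rw [if_pos hcnd]
      by_cases hπ : π.1 i j = 0
      · rw [hπ]
        by_contra hβ
        obtain ⟨j', hj'⟩ : ∃ j', π.1 i j' ≠ 0 := by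
          have := hcnd.1
          simpa [rowIdx] using this
        have hββ : β.1 i j' = π.1 i j' := h i j' hj'
        have hji : j = j' := β.2.1 i hβ (by
          show β.1 i j' ≠ 0
          rw [hββ]; exact hj')
        exact hj' (hji ▸ hπ)
      · exact h i j hπ
    · rw [if_neg hcnd]
      symm
      by_contra hπ
      exact hcnd ⟨by
        simp only [rowIdx, Finset.mem_filter, Finset.mem_univ, true_and]
        exact ⟨j, hπ⟩, by
        simp only [colIdx, Finset.mem_filter, Finset.mem_univ, true_and]
        exact ⟨i, hπ⟩⟩

theorem isRC_of_le (M N : Matrix (Fin n) (Fin n) (GA G))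
    (h : ∀ i j, M i j ≠ 0 → M i j = N i j) (hN : IsRC N) : IsRC M := by
  obtain ⟨hr, hco, he⟩ := hN
  refine ⟨fun i a ha b hb => ?_, fun j a ha b hb => ?_, fun i j => ?_⟩
  · exact hr i (show N i a ≠ 0 from (h i a ha) ▸ ha) (show N i b ≠ 0 from (h i b hb) ▸ hb)
  · exact hco j (show N a j ≠ 0 from (h a j ha) ▸ ha) (show N b j ≠ 0 from (h b j hb) ▸ hb)
  · by_cases hM : M i j = 0
    · exact Or.inl hM
    · rw [h i j hM]; exact he i j

/-- the "core": `β` with all diagonal `1` entries removed. -/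
noncomputable def kap (β : GBar G n) : GBar G n :=
  ⟨Matrix.of fun i j => if i = j ∧ β.1 i j = 1 then 0 else β.1 i j, by
    apply isRC_of_le _ β.1 _ β.2
    intro i j hM
    simp only [Matrix.of_apply] at hM ⊢
    split_ifs at hM with hcond
    · exact absurd rfl hM
    · rw [if_neg hcond]⟩

/-- positions at which the core has both a zero row and a zero column. -/
noncomputable def Dlt (β : GBar G n) : Finset (Fin n) :=
  Finset.univ.filter fun i => (∀ j, (kap β).1 i j = 0) ∧ (∀ j, (kap β).1 j i = 0)

/-- the core with diagonal ones re-inserted on `S ∩ Dlt β`. -/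
noncomputable def bS (β : GBar G n) (S : Finset (Fin n)) : GBar G n := by
  refine ⟨Matrix.of fun i j => if i = j ∧ i ∈ S ∩ Dlt β then 1 else (kap β).1 i j,
    fun i a ha b hb => ?_, fun j a ha b hb => ?_, fun i j => ?_⟩
  · simp only [Set.mem_setOf_eq, Matrix.of_apply] at ha hb
    by_cases hi : i ∈ S ∩ Dlt β
    · have hrow : ∀ j', (kap β).1 i j' = 0 := by
        have := Finset.mem_inter.mp hi
        exact ((Finset.mem_filter.mp this.2).2).1
      have ha' : i = a := by
        by_contra hne
        rw [if_neg (fun hand => hne hand.1), hrow] at ha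
        exact ha rfl
      have hb' : i = b := by
        by_contra hne
        rw [if_neg (fun hand => hne hand.1), hrow] at hb
        exact hb rfl
      rw [← ha', ← hb']
    · rw [if_neg (fun hand => hi hand.2)] at ha
      rw [if_neg (fun hand => hi hand.2)] at hb
      exact (kap β).2.1 i ha hb
  · simp only [Set.mem_setOf_eq, Matrix.of_apply] at ha hb
    by_cases hj : j ∈ S ∩ Dlt β
    · have hcol : ∀ i', (kap β).1 i' j = 0 := by
        have := Finset.mem_inter.mp hj
        exact ((Finset.mem_filter.mp this.2).2).2
      have ha' : a = j := by
        by_contra hne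
        rw [if_neg (fun hand : a = j ∧ a ∈ S ∩ Dlt β => hne hand.1), hcol] at ha
        exact ha rfl
      have hb' : b = j := by
        by_contra hne
        rw [if_neg (fun hand : b = j ∧ b ∈ S ∩ Dlt β => hne hand.1), hcol] at hb
        exact hb rfl
      rw [ha', hb']
    · have hha : ¬(a = j ∧ a ∈ S ∩ Dlt β) := by
        rintro ⟨rfl, hmem⟩; exact hj hmem
      have hhb : ¬(b = j ∧ b ∈ S ∩ Dlt β) := by
        rintro ⟨rfl, hmem⟩; exact hj hmem
      rw [if_neg hha] at ha
      rw [if_neg hhb] at hb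
      exact (kap β).2.2.1 j ha hb
  · simp only [Matrix.of_apply]
    split_ifs with h
    · exact Or.inr ⟨1, by rw [MonoidAlgebra.one_def]⟩
    · exact (kap β).2.2.2 i j

noncomputable def Fx (β : GBar G n) : Finset (Fin n) :=
  Finset.univ.filter fun k => β.1 k k = 1

noncomputable def Ent (β : GBar G n) : Finset (Fin n × Fin n) :=
  (Finset.univ ×ˢ Finset.univ).filter fun p => β.1 p.1 p.2 ≠ 0

noncomputable def meas (β : GBar G n) : ℕ := (Fx β).card + n - (Ent β).card

theorem Ent_card_le (β : GBar G n) : (Ent β).card ≤ n := by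
  have h : (Ent β).card ≤ (Finset.univ : Finset (Fin n)).card := by
    apply Finset.card_le_card_of_injOn (fun p : Fin n × Fin n => p.1)
      (fun p _ => Finset.mem_univ p.1)
    intro p hp q hq hpq
    simp only [Finset.mem_coe, Ent, Finset.mem_filter] at hp hq
    simp only at hpq
    have h2 : p.2 = q.2 := β.2.1 p.1 (show β.1 p.1 p.2 ≠ 0 from hp.2)
      (show β.1 p.1 q.2 ≠ 0 from hpq ▸ hq.2)
    exact Prod.ext hpq h2
  simpa using h

theorem kap_diag_ne_one (β : GBar G n) (i : Fin n) : (kap β).1 i i ≠ 1 := by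
  show (if i = i ∧ β.1 i i = 1 then 0 else β.1 i i) ≠ 1
  by_cases h : β.1 i i = 1
  · rw [if_pos ⟨rfl, h⟩]
    exact zero_ne_one
  · rw [if_neg (fun hand => h hand.2)]
    exact h

theorem Fx_bS (β : GBar G n) (S : Finset (Fin n)) : Fx (bS β S) = S ∩ Dlt β := by
  ext i
  simp only [Fx, Finset.mem_filter, Finset.mem_univ, true_and]
  show (if i = i ∧ i ∈ S ∩ Dlt β then 1 else (kap β).1 i i) = 1 ↔ _
  by_cases h : i ∈ S ∩ Dlt β
  · simp [h]
  · rw [if_neg (fun hand => h hand.2)]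
    exact ⟨fun hk => absurd hk (kap_diag_ne_one β i), fun hk => absurd hk h⟩

theorem Fx_subset_Dlt (β : GBar G n) : Fx β ⊆ Dlt β := by
  intro i hi
  simp only [Fx, Finset.mem_filter, Finset.mem_univ, true_and] at hi
  simp only [Dlt, Finset.mem_filter, Finset.mem_univ, true_and]
  have hne : β.1 i i ≠ 0 := by rw [hi]; exact one_ne_zero
  constructor
  · intro j
    show (if i = j ∧ β.1 i j = 1 then 0 else β.1 i j) = 0
    by_cases h : i = j ∧ β.1 i j = 1
    · rw [if_pos h]
    · rw [if_neg h]
      by_contra hne2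
      exact h ⟨(β.2.1 i hne hne2).symm ▸ rfl, by
        have : i = j := β.2.1 i hne hne2
        rw [← this]; exact hi⟩
  · intro j
    show (if j = i ∧ β.1 j i = 1 then 0 else β.1 j i) = 0
    by_cases h : j = i ∧ β.1 j i = 1
    · rw [if_pos h]
    · rw [if_neg h]
      by_contra hne2
      exact h ⟨β.2.2.1 i hne2 hne, by
        have : j = i := β.2.2.1 i hne2 hne
        rw [this]; exact hi⟩

theorem bS_Fx_eq_self (β : GBar G n) : bS β (Fx β) = β := by
  apply Subtype.ext
  apply Matrix.ext
  intro i j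
  show (if i = j ∧ i ∈ Fx β ∩ Dlt β then 1 else (kap β).1 i j) = β.1 i j
  by_cases h : i = j ∧ i ∈ Fx β ∩ Dlt β
  · rw [if_pos h]
    obtain ⟨rfl, hmem⟩ := h
    have := (Finset.mem_filter.mp (Finset.mem_inter.mp hmem).1).2
    exact this.symm
  · rw [if_neg h]
    show (if i = j ∧ β.1 i j = 1 then 0 else β.1 i j) = β.1 i j
    by_cases h2 : i = j ∧ β.1 i j = 1
    · exfalso
      apply h
      refine ⟨h2.1, Finset.mem_inter.mpr ⟨?_, ?_⟩⟩
      · simp only [Fx, Finset.mem_filter, Finset.mem_univ, true_and]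
        rw [h2.1]; exact h2.1 ▸ h2.2
      · apply Fx_subset_Dlt
        simp only [Fx, Finset.mem_filter, Finset.mem_univ, true_and]
        rw [h2.1]; exact h2.1 ▸ h2.2
    · rw [if_neg h2]

theorem bS_empty (β : GBar G n) : bS β ∅ = kap β := by
  apply Subtype.ext
  apply Matrix.ext
  intro i j
  show (if i = j ∧ i ∈ (∅ : Finset (Fin n)) ∩ Dlt β then 1 else (kap β).1 i j) = _
  rw [if_neg (by simp)]

theorem Ent_bS (β : GBar G n) (S : Finset (Fin n)) :
    Ent (bS β S) = Ent (kap β) ∪ (S ∩ Dlt β).image (fun i => (i, i)) := by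
  ext p
  simp only [Ent, Finset.mem_filter, Finset.mem_product, Finset.mem_univ, true_and,
    Finset.mem_union, Finset.mem_image, and_true]
  show (if p.1 = p.2 ∧ p.1 ∈ S ∩ Dlt β then (1 : GA G) else (kap β).1 p.1 p.2) ≠ 0 ↔ _
  by_cases h : p.1 = p.2 ∧ p.1 ∈ S ∩ Dlt β
  · rw [if_pos h]
    constructor
    · intro _
      right
      exact ⟨p.1, h.2, by rw [Prod.ext_iff]; exact ⟨rfl, h.1⟩⟩
    · intro _
      exact one_ne_zero
  · rw [if_neg h]
    constructor
    · exact fun hk => Or.inl hk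
    · rintro (hk | ⟨i, hi, rfl⟩)
      · exact hk
      · exact absurd ⟨rfl, hi⟩ h

theorem Ent_bS_card (β : GBar G n) (S : Finset (Fin n)) :
    (Ent (bS β S)).card = (Ent (kap β)).card + (S ∩ Dlt β).card := by
  have hdis : Disjoint (Ent (kap β)) ((S ∩ Dlt β).image (fun i => (i, i))) := by
    rw [Finset.disjoint_right]
    intro p hp
    obtain ⟨i, hi, rfl⟩ := Finset.mem_image.mp hp
    simp only [Ent, Finset.mem_filter, Finset.mem_product, Finset.mem_univ, true_and,
      and_true, not_not]
    exact (((Finset.mem_filter.mp (Finset.mem_inter.mp hi).2).2).1) i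
  rw [Ent_bS, Finset.card_union_of_disjoint hdis,
    Finset.card_image_of_injective _ (fun a b hab => (Prod.ext_iff.mp hab).1)]

theorem meas_bS (β : GBar G n) (S : Finset (Fin n)) :
    meas (bS β S) = n - (Ent (kap β)).card := by
  have h1 := Ent_bS_card β S
  have h2 := Ent_card_le (bS β S)
  have h3 := Fx_bS β S
  simp only [meas, h3, h1]
  omega

end ThetaAux

namespace ThetaAux
open scoped Classical
open MonoidAlgebra
variable {G : Type*} [Group G] {n : ℕ}

theorem ext_bS_mono (β : GBar G n) {T S : Finset (Fin n)} (hTS : T ⊆ S) :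
    ExtM (bS β T) (bS β S) := by
  intro i j hne
  have hne' : (if i = j ∧ i ∈ T ∩ Dlt β then (1 : GA G) else (kap β).1 i j) ≠ 0 := hne
  show (if i = j ∧ i ∈ S ∩ Dlt β then (1 : GA G) else (kap β).1 i j)
    = (if i = j ∧ i ∈ T ∩ Dlt β then (1 : GA G) else (kap β).1 i j)
  by_cases h : i = j ∧ i ∈ T ∩ Dlt β
  · rw [if_pos h, if_pos ⟨h.1, Finset.mem_inter.mpr
      ⟨hTS (Finset.mem_inter.mp h.2).1, (Finset.mem_inter.mp h.2).2⟩⟩]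
  · rw [if_neg h] at hne'
    have hiD : i ∉ Dlt β := by
      intro hiD
      exact hne' ((((Finset.mem_filter.mp hiD).2).1) j)
    rw [if_neg h, if_neg (fun hand => hiD (Finset.mem_inter.mp hand.2).2)]

theorem classify (β' β : GBar G n) (T : Finset (Fin n)) (hT : T ⊆ Dlt β)
    (hext : ExtM (bS β T) β') :
    (∃ S, T ⊆ S ∧ S ⊆ Dlt β ∧ β' = bS β S) ∨ meas β' < n - (Ent (kap β)).card := by
  have hTT : T ∩ Dlt β = T := Finset.inter_eq_left.mpr hT
  set P : Finset (Fin n × Fin n) := Ent β' \ Ent (bS β T) with hP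
  set D1 : Finset (Fin n × Fin n) := P.filter (fun p => p.1 = p.2 ∧ β'.1 p.1 p.2 = 1) with hD1
  have hbT_entry : ∀ i j, (bS β T).1 i j
      = if i = j ∧ i ∈ T ∩ Dlt β then (1 : GA G) else (kap β).1 i j := fun i j => rfl
  have hEntsub : Ent (bS β T) ⊆ Ent β' := by
    intro p hp
    simp only [Ent, Finset.mem_filter, Finset.mem_product, Finset.mem_univ, true_and] at hp ⊢
    rw [hext p.1 p.2 hp]
    exact hp
  have hcardP : (Ent β').card = (Ent (bS β T)).card + P.card := by
    have h := Finset.card_sdiff_add_card_eq_card hEntsub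
    rw [← hP] at h
    omega
  have hFxT : ∀ k ∈ T, β'.1 k k = 1 := by
    intro k hk
    have h1 : (bS β T).1 k k = 1 := by
      rw [hbT_entry, if_pos ⟨rfl, Finset.mem_inter.mpr ⟨hk, hT hk⟩⟩]
    have h2 := hext k k (by rw [h1]; exact one_ne_zero)
    rw [h2, h1]
  have hFx : Fx β' = T ∪ D1.image Prod.fst := by
    ext k
    simp only [Fx, Finset.mem_filter, Finset.mem_univ, true_and, Finset.mem_union,
      Finset.mem_image]
    constructor
    · intro hk1
      by_cases hkT : k ∈ T
      · exact Or.inl hkT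
      · right
        have hkap : (kap β).1 k k = 0 := by
          by_contra hkap
          have hb : (bS β T).1 k k = (kap β).1 k k := by
            rw [hbT_entry, if_neg (fun hand => hkT (hTT ▸ hand.2))]
          have := hext k k (by rw [hb]; exact hkap)
          rw [hb] at this
          rw [this] at hk1
          exact kap_diag_ne_one β k hk1
        refine ⟨(k, k), ?_, rfl⟩
        rw [hD1, Finset.mem_filter]
        refine ⟨?_, rfl, hk1⟩
        rw [hP, Finset.mem_sdiff]
        constructor
        · simp only [Ent, Finset.mem_filter, Finset.mem_product, Finset.mem_univ, true_and]
          rw [hk1]; exact one_ne_zero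
        · simp only [Ent, Finset.mem_filter, Finset.mem_product, Finset.mem_univ, true_and,
            not_not]
          rw [hbT_entry, if_neg (fun hand => hkT (hTT ▸ hand.2))]
          exact hkap
    · rintro (hkT | ⟨p, hp, rfl⟩)
      · exact hFxT k hkT
      · have h2 := (Finset.mem_filter.mp hp).2
        nth_rewrite 2 [h2.1]
        exact h2.2
  have hdisj : Disjoint T (D1.image Prod.fst) := by
    rw [Finset.disjoint_right]
    intro k hk
    obtain ⟨p, hp, hpk⟩ := Finset.mem_image.mp hk
    intro hkT
    have hpP := (Finset.mem_filter.mp hp).1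
    have hpd := (Finset.mem_filter.mp hp).2.1
    have hpe : p = (k, k) := by
      rw [Prod.ext_iff]
      exact ⟨hpk, hpd ▸ hpk⟩
    rw [hpe] at hpP
    have : (k, k) ∈ Ent (bS β T) := by
      simp only [Ent, Finset.mem_filter, Finset.mem_product, Finset.mem_univ, true_and]
      rw [hbT_entry, if_pos ⟨rfl, Finset.mem_inter.mpr ⟨hkT, hT hkT⟩⟩]
      exact one_ne_zero
    exact (Finset.mem_sdiff.mp hpP).2 this
  have hcardFx : (Fx β').card = T.card + D1.card := by
    rw [hFx, Finset.card_union_of_disjoint hdisj, Finset.card_image_of_injOn]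
    intro p hp q hq hpq
    simp only [Finset.mem_coe, hD1, Finset.mem_filter] at hp hq
    rw [Prod.ext_iff]
    exact ⟨hpq, hp.2.1 ▸ hq.2.1 ▸ hpq⟩
  have hD1P : D1 ⊆ P := Finset.filter_subset _ _
  by_cases hcase : D1.card = P.card
  · have hPD1 : P = D1 := (Finset.eq_of_subset_of_card_le hD1P (le_of_eq hcase.symm)).symm
    left
    have hTFx : T ⊆ Fx β' := by
      intro k hk
      simp only [Fx, Finset.mem_filter, Finset.mem_univ, true_and]
      exact hFxT k hk
    have hSD : Fx β' ⊆ Dlt β := by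
      intro k hk
      simp only [Fx, Finset.mem_filter, Finset.mem_univ, true_and] at hk
      by_cases hkT : k ∈ T
      · exact hT hkT
      · simp only [Dlt, Finset.mem_filter, Finset.mem_univ, true_and]
        constructor
        · intro j
          by_contra hkap
          have hcond : ¬(k = j ∧ k ∈ T ∩ Dlt β) := fun hand => hkT (hTT ▸ hand.2)
          have hb : (bS β T).1 k j = (kap β).1 k j := by rw [hbT_entry, if_neg hcond]
          have hβ' := hext k j (by rw [hb]; exact hkap)
          rw [hb] at hβ'
          have hjk : j = k := β'.2.1 k (show β'.1 k j ≠ 0 by rw [hβ']; exact hkap)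
            (show β'.1 k k ≠ 0 by rw [hk]; exact one_ne_zero)
          rw [hjk] at hβ' hkap
          rw [hβ'] at hk
          exact kap_diag_ne_one β k hk
        · intro j
          by_contra hkap
          have hcond : ¬(j = k ∧ j ∈ T ∩ Dlt β) := by
            rintro ⟨rfl, hand⟩
            exact hkT (hTT ▸ hand)
          have hb : (bS β T).1 j k = (kap β).1 j k := by rw [hbT_entry, if_neg hcond]
          have hβ' := hext j k (by rw [hb]; exact hkap)
          rw [hb] at hβ'
          have hjk : j = k := β'.2.2.1 k (show β'.1 j k ≠ 0 by rw [hβ']; exact hkap)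
            (show β'.1 k k ≠ 0 by rw [hk]; exact one_ne_zero)
          rw [hjk] at hβ' hkap
          rw [hβ'] at hk
          exact kap_diag_ne_one β k hk
    refine ⟨Fx β', hTFx, hSD, ?_⟩
    have hSS : Fx β' ∩ Dlt β = Fx β' := Finset.inter_eq_left.mpr hSD
    apply Subtype.ext
    apply Matrix.ext
    intro i j
    show β'.1 i j = (if i = j ∧ i ∈ Fx β' ∩ Dlt β then (1 : GA G) else (kap β).1 i j)
    by_cases hcnd : i = j ∧ i ∈ Fx β' ∩ Dlt β
    · rw [if_pos hcnd]
      obtain ⟨rfl, hmem⟩ := hcnd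
      exact (Finset.mem_filter.mp (Finset.mem_inter.mp hmem).1).2
    · rw [if_neg hcnd]
      by_cases hkap : (kap β).1 i j = 0
      · rw [hkap]
        by_contra hβne
        have hEnt : (i, j) ∈ Ent β' := by
          simp only [Ent, Finset.mem_filter, Finset.mem_product, Finset.mem_univ, true_and]
          exact hβne
        by_cases hmem : (i, j) ∈ Ent (bS β T)
        · have hbne : (bS β T).1 i j ≠ 0 := by
            simpa [Ent, Finset.mem_filter] using hmem
          rw [hbT_entry] at hbne
          by_cases hcond2 : i = j ∧ i ∈ T ∩ Dlt β
          · have hiT : i ∈ T := (Finset.mem_inter.mp hcond2.2).1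
            exact hcnd ⟨hcond2.1, Finset.mem_inter.mpr ⟨hTFx hiT, hT hiT⟩⟩
          · rw [if_neg hcond2] at hbne
            exact hbne hkap
        · have hpmem : (i, j) ∈ D1 := by
            rw [← hPD1, hP, Finset.mem_sdiff]
            exact ⟨hEnt, hmem⟩
          have h2 := (Finset.mem_filter.mp hpmem).2
          have h21 : i = j := h2.1
          have h22 : β'.1 i j = 1 := h2.2
          have hiFx : i ∈ Fx β' := by
            simp only [Fx, Finset.mem_filter, Finset.mem_univ, true_and]
            nth_rewrite 2 [h21]
            exact h22
          exact hcnd ⟨h21, Finset.mem_inter.mpr ⟨hiFx, hSD hiFx⟩⟩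
      · have hcond : ¬(i = j ∧ i ∈ T ∩ Dlt β) := by
          rintro ⟨rfl, hand⟩
          have : (kap β).1 i i = 0 :=
            ((Finset.mem_filter.mp (Finset.mem_inter.mp hand).2).2).1 i
          exact hkap this
        have hb : (bS β T).1 i j = (kap β).1 i j := by rw [hbT_entry, if_neg hcond]
        have := hext i j (by rw [hb]; exact hkap)
        rw [hb] at this
        exact this
  · right
    have hD1lt : D1.card < P.card := lt_of_le_of_ne (Finset.card_le_card hD1P) hcase
    have hEcb := Ent_card_le β'
    have hEbT := Ent_bS_card β T
    rw [hTT] at hEbT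
    simp only [meas]
    omega

end ThetaAux

namespace ThetaAux
open scoped Classical
open MonoidAlgebra
variable {G : Type*} [Group G] {n : ℕ}

set_option maxHeartbeats 1000000 in
theorem main_zero {F : Type*} [Field F]
    (z : MonoidAlgebra F (GBar G (n + 1)))
    (hc : ∀ y : MonoidAlgebra F (GBar G (n + 1)), z * y = y * z)
    (hsupp : ∀ γ ∈ z.coeff.support,
      matDeg ((γ : GBar G (n + 1)) : Matrix (Fin (n+1)) (Fin (n+1)) (GA G)) ≤ n)
    (hθ : Finsupp.mapDomain corner z.coeff = 0) : z = 0 := by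
  set Cl : Finset (Fin (n + 1)) := {Fin.last n}ᶜ with hClDef
  -- Step 1 : `z ε = 0` for the distinguished idempotent
  have hEzE : single (eS Cl) (1 : F) * (z * single (eS Cl) 1) = 0 := by
    rw [← MonoidAlgebra.coeff_eq_zero, single_one_mul_eq_mapDomain, mul_single_one_eq_mapDomain]
    have hco : (fun β => (eS Cl : GBar G (n + 1)) * β) ∘ (fun β => β * eS Cl)
        = iota ∘ corner := by
      funext β
      exact eps_conj_eq_iota_corner β
    rw [← Finsupp.mapDomain_comp, hco, Finsupp.mapDomain_comp, hθ, Finsupp.mapDomain_zero]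
  have hzE : z * single (eS Cl) (1 : F) = 0 := by
    have h2 : single (eS (G := G) Cl) (1 : F) * single (eS Cl) (1 : F) = single (eS Cl) 1 := by
      rw [MonoidAlgebra.single_mul_single, one_mul, eS_mul_eS (G := G) Cl Cl, Finset.inter_self]
    calc z * single (eS Cl) (1 : F)
        = z * (single (eS Cl) 1 * single (eS Cl) 1) := by rw [h2]
      _ = z * single (eS Cl) 1 * single (eS Cl) 1 := by rw [mul_assoc]
      _ = single (eS Cl) 1 * z * single (eS Cl) 1 := by rw [hc]
      _ = single (eS Cl) 1 * (z * single (eS Cl) 1) := by rw [mul_assoc]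
      _ = 0 := hEzE
  -- Step 2 : `z * eS I = 0` for every proper `I`
  have hze : ∀ I : Finset (Fin (n + 1)), I ≠ Finset.univ →
      z * single (eS I) (1 : F) = 0 := by
    intro I hI
    obtain ⟨k, hk⟩ : ∃ k, k ∉ I := by
      by_contra h
      push_neg at h
      exact hI (Finset.eq_univ_iff_forall.mpr h)
    set sw : Equiv.Perm (Fin (n + 1)) := Equiv.swap k (Fin.last n) with hswdef
    have hswap : (pEl sw : GBar G (n + 1)) * eS Cl * pEl sw = eS (Cl.image sw) := by
      have h := pEl_conj_eS (G := G) sw Cl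
      rwa [show sw⁻¹ = sw from Equiv.swap_inv k (Fin.last n)] at h
    have himg : Cl.image sw = ({k}ᶜ : Finset (Fin (n + 1))) := by
      ext i
      rw [mem_image_equiv]
      simp only [hClDef, Finset.mem_compl, Finset.mem_singleton]
      have hsymm : sw.symm = sw := by rw [hswdef]; exact Equiv.symm_swap k (Fin.last n)
      rw [hsymm]
      constructor
      · intro h hik
        apply h
        rw [hik, hswdef]
        exact Equiv.swap_apply_left k (Fin.last n)
      · intro h hsw
        apply h
        have : sw (sw i) = sw (Fin.last n) := by rw [hsw]
        rw [Equiv.swap_apply_self, hswdef, Equiv.swap_apply_right] at this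
        exact this
    have hins : insert k I ∩ ({k}ᶜ : Finset (Fin (n + 1))) = I := by
      ext i
      simp only [Finset.mem_inter, Finset.mem_insert, Finset.mem_compl, Finset.mem_singleton]
      constructor
      · rintro ⟨hi | hi, hik⟩
        · exact absurd hi hik
        · exact hi
      · intro hi
        exact ⟨Or.inr hi, fun hik => hk (hik ▸ hi)⟩
    have hfact : (eS I : GBar G (n + 1)) = eS (insert k I) * pEl sw * eS Cl * pEl sw := by
      rw [mul_assoc, mul_assoc, ← mul_assoc (pEl sw), hswap, eS_mul_eS, himg, hins]
    have key : ∀ X Y : MonoidAlgebra F (GBar G (n + 1)),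
        z * (X * single (eS Cl) 1 * Y) = 0 := by
      intro X Y
      rw [← mul_assoc z, ← mul_assoc z, hc X, mul_assoc X z, hzE, mul_zero, zero_mul]
    have hsingle : single (eS (G := G) I) (1 : F)
        = single (eS (insert k I)) 1 * single (pEl sw) 1 * single (eS Cl) 1
          * single (pEl sw) 1 := by
      simp only [MonoidAlgebra.single_mul_single, one_mul]
      rw [hfact]
    rw [hsingle]
    exact key _ _
  -- Step 3 : the extension sums vanish
  have hU : ∀ π : GBar G (n + 1), rowIdx π ≠ Finset.univ →
      ∑ β ∈ z.coeff.support.filter (fun b => ExtM π b), z.coeff β = 0 := by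
    intro π hrow
    have hIJ : rowIdx π ∩ colIdx π ≠ Finset.univ := by
      intro h
      apply hrow
      apply Finset.eq_univ_iff_forall.mpr
      intro i
      exact (Finset.mem_inter.mp ((Finset.eq_univ_iff_forall.mp h) i)).1
    have helem : single (eS (rowIdx π)) (1 : F) * (z * single (eS (colIdx π)) 1) = 0 := by
      calc single (eS (rowIdx π)) (1 : F) * (z * single (eS (colIdx π)) 1)
          = single (eS (rowIdx π)) 1 * z * single (eS (colIdx π)) 1 := by rw [mul_assoc]
        _ = z * single (eS (rowIdx π)) 1 * single (eS (colIdx π)) 1 := by rw [hc]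
        _ = z * (single (eS (rowIdx π)) 1 * single (eS (colIdx π)) 1) := by rw [mul_assoc]
        _ = z * single ((eS (rowIdx π) : GBar G (n+1)) * eS (colIdx π)) 1 := by
            rw [MonoidAlgebra.single_mul_single, one_mul]
        _ = z * single (eS (rowIdx π ∩ colIdx π)) 1 := by rw [eS_mul_eS (G := G)]
        _ = 0 := hze _ hIJ
    have hmap : (single (eS (rowIdx π)) (1 : F) * (z * single (eS (colIdx π)) 1)).coeff
        = Finsupp.mapDomain
            (fun β => (eS (rowIdx π) : GBar G (n+1)) * (β * eS (colIdx π))) z.coeff := by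
      rw [single_one_mul_eq_mapDomain, mul_single_one_eq_mapDomain, ← Finsupp.mapDomain_comp]
      rfl
    have h0 : Finsupp.mapDomain
        (fun β => (eS (rowIdx π) : GBar G (n+1)) * (β * eS (colIdx π))) z.coeff = 0 := by
      rw [← hmap, helem, MonoidAlgebra.coeff_zero]
    have hval := mapDomain_apply_eq_sum
      (fun β => (eS (rowIdx π) : GBar G (n+1)) * (β * eS (colIdx π))) z.coeff π
    rw [h0, Finsupp.zero_apply] at hval
    have hfilters : z.coeff.support.filter
          (fun b => (eS (rowIdx π) : GBar G (n+1)) * (b * eS (colIdx π)) = π)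
        = z.coeff.support.filter (fun b => ExtM π b) := by
      apply Finset.filter_congr
      intro b _
      constructor
      · intro h
        exact (fiber_iff π b).mp h
      · intro h
        exact (fiber_iff π b).mpr h
    exact (Finset.sum_congr hfilters (fun _ _ => rfl)).symm.trans hval.symm
  -- degree hypothesis : `z` vanishes on fix-point-free elements
  have hdeg : ∀ β : GBar G (n + 1), Fx β = ∅ → z.coeff β = 0 := by
    intro β hβ
    by_contra hne
    have hmem : β ∈ z.coeff.support := Finsupp.mem_support_iff.mpr hne
    have hle := hsupp β hmem
    have hfe : Finset.univ.filter (fun k : Fin (n+1) => β.1 k k ≠ 1) = Finset.univ := by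
      apply Finset.eq_univ_iff_forall.mpr
      intro k
      simp only [Finset.mem_filter, Finset.mem_univ, true_and]
      intro hk
      have : k ∈ Fx β := by
        simp only [Fx, Finset.mem_filter, Finset.mem_univ, true_and]
        exact hk
      rw [hβ] at this
      exact absurd this (Finset.notMem_empty k)
    rw [matDeg, hfe, Finset.card_univ, Fintype.card_fin] at hle
    omega
  -- Main induction on the measure
  have hmain : ∀ m : ℕ, ∀ β : GBar G (n + 1), meas β = m → z.coeff β = 0 := by
    intro m
    induction m using Nat.strong_induction_on with
    | _ m IH =>
    intro β hm
    have hmeq : meas β = n + 1 - (Ent (kap β)).card := by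
      conv_lhs => rw [← bS_Fx_eq_self β]
      exact meas_bS β (Fx β)
    have hHT : ∀ T ⊆ Dlt β, T ≠ Dlt β →
        ∑ S ∈ (Dlt β).powerset.filter (fun S => T ⊆ S), z.coeff (bS β S) = 0 := by
      intro T hTsub hTne
      obtain ⟨i0, hi0D, hi0T⟩ : ∃ i0, i0 ∈ Dlt β ∧ i0 ∉ T := by
        by_contra hcon
        push_neg at hcon
        exact hTne (Finset.Subset.antisymm hTsub hcon)
      have hrow : rowIdx (bS β T) ≠ Finset.univ := by
        intro hun
        have hmem : i0 ∈ rowIdx (bS β T) := hun ▸ Finset.mem_univ i0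
        simp only [rowIdx, Finset.mem_filter, Finset.mem_univ, true_and] at hmem
        obtain ⟨j, hj⟩ := hmem
        apply hj
        show (if i0 = j ∧ i0 ∈ T ∩ Dlt β then (1 : GA G) else (kap β).1 i0 j) = 0
        rw [if_neg (fun hand => hi0T (Finset.mem_inter.mp hand.2).1)]
        exact (((Finset.mem_filter.mp hi0D).2).1) j
      have hA := hU (bS β T) hrow
      set A := z.coeff.support.filter (fun b => ExtM (bS β T) b) with hAdef
      have hAsub : A ⊆ ((Dlt β).powerset.filter (fun S => T ⊆ S)).image (bS β) := by
        intro β' hβ'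
        rw [hAdef, Finset.mem_filter] at hβ'
        obtain ⟨hβs, hβe⟩ := hβ'
        rcases classify β' β T hTsub hβe with ⟨S, hTS, hSD, hbeq⟩ | hlt
        · exact Finset.mem_image.mpr
            ⟨S, Finset.mem_filter.mpr ⟨Finset.mem_powerset.mpr hSD, hTS⟩, hbeq.symm⟩
        · exfalso
          have hlt' : meas β' < m := by
            rw [← hm, hmeq]
            exact hlt
          exact Finsupp.mem_support_iff.mp hβs (IH (meas β') hlt' β' rfl)
      have hsum2 : ∑ β' ∈ ((Dlt β).powerset.filter (fun S => T ⊆ S)).image (bS β),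
          z.coeff β' = 0 := by
        rw [← Finset.sum_subset hAsub]
        · exact hA
        · intro β' hβ' hnA
          by_contra hne
          apply hnA
          rw [hAdef, Finset.mem_filter]
          refine ⟨Finsupp.mem_support_iff.mpr hne, ?_⟩
          obtain ⟨S, hS, hbeq⟩ := Finset.mem_image.mp hβ'
          rw [← hbeq]
          exact ext_bS_mono β (Finset.mem_filter.mp hS).2
      rw [Finset.sum_image (fun S hSm S' hS'm heq => ?_)] at hsum2
      · exact hsum2
      · have h1 := congrArg Fx heq
        rw [Fx_bS, Fx_bS] at h1
        have hSsub := Finset.mem_powerset.mp (Finset.mem_filter.mp hSm).1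
        have hS'sub := Finset.mem_powerset.mp (Finset.mem_filter.mp hS'm).1
        rwa [Finset.inter_eq_left.mpr hSsub, Finset.inter_eq_left.mpr hS'sub] at h1
    have h0 : z.coeff (bS β ∅) = 0 := by
      rw [bS_empty]
      apply hdeg
      apply Finset.eq_empty_iff_forall_notMem.mpr
      intro k hk
      simp only [Fx, Finset.mem_filter, Finset.mem_univ, true_and] at hk
      exact kap_diag_ne_one β k hk
    have hmob := mobius_lemma (Dlt β) (fun S => z.coeff (bS β S)) h0 hHT (Fx β) (Fx_subset_Dlt β)
    have hmob' : z.coeff (bS β (Fx β)) = 0 := hmob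
    rwa [bS_Fx_eq_self β] at hmob'
  ext β
  rw [hmain (meas β) β rfl]
  rfl

end ThetaAux

/-- The restriction of the projection `θ_{n+1} : F[Ḡ_{n+1}] → F[Ḡ_n]` (the linear
extension of taking upper-left corners) to the subspace of the center of `F[Ḡ_{n+1}]`
spanned by the elements of degree at most `n` is injective. -/
theorem theta_injOn_center (F : Type*) [Field F] (G : Type*) [Group G] (n : ℕ) :
    Set.InjOn (fun x : MonoidAlgebra F (GBar G (n + 1)) => Finsupp.mapDomain corner x.coeff)
      ((Subalgebra.center F (MonoidAlgebra F (GBar G (n + 1))) : Set _) ∩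
        (Submodule.span F {x : MonoidAlgebra F (GBar G (n + 1)) |
          ∃ γ : GBar G (n + 1),
            matDeg (γ : Matrix (Fin (n+1)) (Fin (n+1)) (GA G)) ≤ n ∧
            x = single γ (1 : F)} : Set _)) := by
  intro x hx y hy hxy
  set z : MonoidAlgebra F (GBar G (n + 1)) := x - y with hzdef
  have hcz : ∀ w : MonoidAlgebra F (GBar G (n + 1)), z * w = w * z := by
    have hmem : z ∈ Subalgebra.center F (MonoidAlgebra F (GBar G (n + 1))) :=
      sub_mem hx.1 hy.1
    intro w
    exact (Subalgebra.mem_center_iff.mp hmem w).symm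
  have hseteq : {x : MonoidAlgebra F (GBar G (n + 1)) |
        ∃ γ : GBar G (n + 1),
          matDeg ((γ : GBar G (n+1)) : Matrix (Fin (n+1)) (Fin (n+1)) (GA G)) ≤ n ∧
          x = single γ (1 : F)}
      = (fun γ : GBar G (n + 1) => MonoidAlgebra.single γ (1 : F)) ''
          {γ : GBar G (n + 1) |
            matDeg ((γ : GBar G (n+1)) : Matrix (Fin (n+1)) (Fin (n+1)) (GA G)) ≤ n} := by
    ext w
    simp only [Set.mem_setOf_eq, Set.mem_image]
    constructor
    · rintro ⟨γ, h1, h2⟩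
      exact ⟨γ, h1, h2.symm⟩
    · rintro ⟨γ, h1, h2⟩
      exact ⟨γ, h1, h2.symm⟩
  have hsupported : z.coeff ∈ Finsupp.supported F F
      {γ : GBar G (n + 1) |
        matDeg ((γ : GBar G (n+1)) : Matrix (Fin (n+1)) (Fin (n+1)) (GA G)) ≤ n} := by
    have hgen : ∀ w ∈ Submodule.span F {x : MonoidAlgebra F (GBar G (n + 1)) |
          ∃ γ : GBar G (n + 1),
            matDeg ((γ : GBar G (n+1)) : Matrix (Fin (n+1)) (Fin (n+1)) (GA G)) ≤ n ∧
            x = single γ (1 : F)},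
        w.coeff ∈ Finsupp.supported F F
          {γ : GBar G (n + 1) |
            matDeg ((γ : GBar G (n+1)) : Matrix (Fin (n+1)) (Fin (n+1)) (GA G)) ≤ n} := by
      intro w hw
      induction hw using Submodule.span_induction with
      | mem w hw =>
        obtain ⟨γ, h1, rfl⟩ := hw
        exact Finsupp.single_mem_supported F (1 : F) h1
      | zero => exact Submodule.zero_mem _
      | add a b _ _ ha hb => rw [MonoidAlgebra.coeff_add]; exact Submodule.add_mem _ ha hb
      | smul r a _ ha => rw [MonoidAlgebra.coeff_smul]; exact Submodule.smul_mem _ r ha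
    exact hgen z (sub_mem hx.2 hy.2)
  have hsuppz : ∀ γ ∈ z.coeff.support,
      matDeg ((γ : GBar G (n+1)) : Matrix (Fin (n+1)) (Fin (n+1)) (GA G)) ≤ n := by
    intro γ hγ
    exact (Finsupp.mem_supported F z.coeff).mp hsupported hγ
  have hθz : Finsupp.mapDomain corner z.coeff = 0 := by
    have hsub := LinearMap.map_sub (Finsupp.lmapDomain F F (corner (G := G) (n := n))) x.coeff y.coeff
    simp only [Finsupp.lmapDomain_apply] at hsub
    have hxy' : Finsupp.mapDomain corner x.coeff = Finsupp.mapDomain corner y.coeff := hxy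
    rw [hzdef, MonoidAlgebra.coeff_sub, hsub, hxy', sub_self]
  have hz0 : z = 0 := ThetaAux.main_zero z hcz hsuppz hθz
  exact sub_eq_zero.mp hz0
end
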